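/- arXiv:1605.05181 — 5 statements merged into one kernel-verified Lean document; each statement's English description precedes it below -/
import Mathlib

section
/- Let F(t) = Σ_{n≥0} α_n t^n and R(t) = Σ_{n≥1} (R_n/n) t^n be formal power series with α_0 = 1 and R_1 = 0, and define the polynomial sequence {P_n} by F(xt − R(t)) = Σ_{n≥0} α_n P_n(x) t^n. Then for every n ≥ 1, the identity α_n x P_n'(x) − Σ_{k=1}^{n} R_{k+1} α_{n−k} P'_{n−k}(x) = n α_n P_n(x) holds. -/
/-- The power series `x*t - R(t)` (in `t`, coefficients in `Polynomial ℂ`),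
where `R(t) = ∑_{n≥1} (R n / n) t^n`. -/
noncomputable def genSeries (R : ℕ → ℂ) : PowerSeries (Polynomial ℂ) :=
  PowerSeries.mk fun j =>
    if j = 0 then 0
    else if j = 1 then Polynomial.X - Polynomial.C (R 1)
    else -Polynomial.C (R j / (j : ℂ))

open PowerSeries Polynomial

namespace StmtAux


noncomputable def DxL : PowerSeries (Polynomial ℂ) →ₗ[ℂ] PowerSeries (Polynomial ℂ) where
  toFun φ := PowerSeries.mk fun n => derivative (PowerSeries.coeff n φ)
  map_add' φ ψ := by ext n; simp
  map_smul' c φ := by ext n; simp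

lemma DxL_leibniz (a b : PowerSeries (Polynomial ℂ)) :
    DxL (a * b) = a • DxL b + b • DxL a := by
  ext n
  simp only [DxL, LinearMap.coe_mk, AddHom.coe_mk, PowerSeries.coeff_mk, smul_eq_mul,
    map_add, PowerSeries.coeff_mul, map_sum, derivative_mul]
  rw [Finset.sum_add_distrib]
  have hswap : ∀ m : ℕ, ∑ x ∈ Finset.HasAntidiagonal.antidiagonal m,
      Polynomial.derivative ((PowerSeries.coeff x.1) a) * (PowerSeries.coeff x.2) b =
      ∑ x ∈ Finset.HasAntidiagonal.antidiagonal m,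
        (PowerSeries.coeff x.1) b * Polynomial.derivative ((PowerSeries.coeff x.2) a) := by
    intro m
    rw [← Finset.HasAntidiagonal.map_swap_antidiagonal, Finset.sum_map]
    simp [mul_comm]
  rw [hswap, add_comm]

noncomputable def Dx : Derivation ℂ (PowerSeries (Polynomial ℂ)) (PowerSeries (Polynomial ℂ)) :=
  Derivation.mk' DxL DxL_leibniz

lemma coeff_Dx (φ : PowerSeries (Polynomial ℂ)) (n : ℕ) :
    PowerSeries.coeff n (Dx φ) = derivative (PowerSeries.coeff n φ) := by
  simp [Dx, Derivation.mk', DxL]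

lemma Dx_gen (R : ℕ → ℂ) : Dx (genSeries R) = PowerSeries.X := by
  ext n
  rw [coeff_Dx]
  simp only [genSeries, PowerSeries.coeff_mk, PowerSeries.coeff_X]
  rcases n with _ | _ | n <;> simp



lemma coeff_gen_pow_eq_zero (R : ℕ → ℂ) {j m : ℕ} (h : j < m) :
    PowerSeries.coeff j ((genSeries R) ^ m) = 0 := by
  have hX : (PowerSeries.X : PowerSeries (Polynomial ℂ)) ∣ genSeries R := by
    rw [PowerSeries.X_dvd_iff]
    simp [genSeries, ← PowerSeries.coeff_zero_eq_constantCoeff_apply]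
  exact (PowerSeries.X_pow_dvd_iff.mp (pow_dvd_pow_of_dvd hX m)) j h

/-- `A = t * dG/dt`. -/
noncomputable def Aser (R : ℕ → ℂ) : PowerSeries (Polynomial ℂ) :=
  PowerSeries.X * (genSeries R).derivativeFun

lemma coeff_X_mul_deriv (φ : PowerSeries (Polynomial ℂ)) (n : ℕ) :
    PowerSeries.coeff n (PowerSeries.X * φ.derivativeFun)
      = (n : Polynomial ℂ) * PowerSeries.coeff n φ := by
  rcases n with _ | k
  · simp
  · rw [PowerSeries.coeff_succ_X_mul, show φ.derivativeFun = PowerSeries.derivative _ φ from rfl,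
      PowerSeries.coeff_derivative]
    push_cast
    ring

lemma derivFun_pow (φ : PowerSeries (Polynomial ℂ)) (m : ℕ) :
    (φ^m).derivativeFun = m • (φ^(m-1) * φ.derivativeFun) := by
  induction m with
  | zero => simp [PowerSeries.derivativeFun_one]
  | succ k ih =>
    rw [pow_succ, PowerSeries.derivativeFun_mul, ih, smul_eq_mul, smul_eq_mul,
      nsmul_eq_mul, nsmul_eq_mul, Nat.add_sub_cancel]
    cases k with
    | zero => simp
    | succ j =>
      rw [Nat.succ_sub_one]
      push_cast
      ring

lemma coeff_Aser (R : ℕ → ℂ) (hR1 : R 1 = 0) (j : ℕ) :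
    PowerSeries.coeff j (Aser R) =
      if j = 0 then 0 else if j = 1 then Polynomial.X else -Polynomial.C (R j) := by
  rw [Aser, coeff_X_mul_deriv]
  rcases j with _ | _ | k
  · simp [genSeries, hR1]
  · simp [genSeries, hR1]
  · have hk : ((k:ℂ) + 1 + 1) ≠ 0 := by
      exact_mod_cast Nat.succ_ne_zero (k+1)
    simp only [genSeries, PowerSeries.coeff_mk]
    norm_num
    rw [show ((k:Polynomial ℂ) + 1 + 1) = Polynomial.C ((k:ℂ) + 1 + 1) by rw [map_add, map_add, map_one, Polynomial.C_eq_natCast],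
      ← Polynomial.C_mul]
    congr 1
    field_simp

end StmtAux

namespace StmtAux2
open StmtAux

lemma coeff_mul_Aser (R : ℕ → ℂ) (hR1 : R 1 = 0) (ψ : PowerSeries (Polynomial ℂ)) (N : ℕ) :
    PowerSeries.coeff (N+1) (ψ * Aser R) =
      Polynomial.X * PowerSeries.coeff N ψ
        - ∑ k ∈ Finset.Icc 1 (N+1), Polynomial.C (R (k+1)) *
            PowerSeries.coeff (N+1-k) (ψ * PowerSeries.X) := by
  rw [mul_comm ψ, PowerSeries.coeff_mul, Finset.Nat.sum_antidiagonal_eq_sum_range_succ_mk,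
    Finset.sum_range_succ', Finset.sum_range_succ']
  rw [← Finset.Ico_add_one_right_eq_Icc, Finset.sum_Ico_eq_sum_range]
  norm_num
  rw [Finset.sum_range_succ]
  simp only [coeff_Aser R hR1]
  norm_num
  have h0 : (PowerSeries.constantCoeff) (Aser R) = 0 := by
    simp [Aser]
  have hlast : N + 1 - (1 + N) = 0 := by omega
  rw [h0, zero_mul, add_zero]
  have hsum : ∑ x ∈ Finset.range N, Polynomial.C (R (1+x+1)) *
        PowerSeries.coeff (N+1-(1+x)) (ψ * PowerSeries.X)
      = ∑ x ∈ Finset.range N, Polynomial.C (R (x+1+1)) *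
        PowerSeries.coeff (N+1-(x+1+1)) ψ := by
    apply Finset.sum_congr rfl
    intro x hx
    simp only [Finset.mem_range] at hx
    have h1 : N+1-(1+x) = (N+1-(x+1+1)) + 1 := by omega
    rw [h1, PowerSeries.coeff_succ_mul_X, show 1+x+1 = x+1+1 by omega]
  rw [hsum]
  ring

lemma deriv_coeff_pow (R : ℕ → ℂ) (m j : ℕ) :
    Polynomial.derivative (PowerSeries.coeff j ((genSeries R)^m)) =
      (m : Polynomial ℂ) * PowerSeries.coeff j
        ((genSeries R)^(m-1) * PowerSeries.X) := by
  rw [← coeff_Dx, Derivation.leibniz_pow, Dx_gen, smul_eq_mul, map_nsmul, nsmul_eq_mul]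

lemma euler (R : ℕ → ℂ) (m j : ℕ) :
    (j : Polynomial ℂ) * PowerSeries.coeff j ((genSeries R)^m) =
      (m : Polynomial ℂ) * PowerSeries.coeff j
        ((genSeries R)^(m-1) * Aser R) := by
  rw [← coeff_X_mul_deriv, derivFun_pow, mul_smul_comm,
    show PowerSeries.X * ((genSeries R)^(m-1) * (genSeries R).derivativeFun)
      = (genSeries R)^(m-1) * Aser R by rw [Aser]; ring,
    map_nsmul, nsmul_eq_mul]

lemma perm (R : ℕ → ℂ) (hR1 : R 1 = 0) (m N : ℕ) :
    Polynomial.X * Polynomial.derivative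
        (PowerSeries.coeff (N+1) ((genSeries R)^m))
      - ∑ k ∈ Finset.Icc 1 (N+1), Polynomial.C (R (k+1)) * Polynomial.derivative
          (PowerSeries.coeff (N+1-k) ((genSeries R)^m))
    = ((N+1 : ℕ) : Polynomial ℂ) *
        PowerSeries.coeff (N+1) ((genSeries R)^m) := by
  simp only [deriv_coeff_pow R m]
  rw [euler R m (N+1), coeff_mul_Aser R hR1]
  rw [PowerSeries.coeff_succ_mul_X, mul_sub, Finset.mul_sum]
  refine congrArg₂ (· - ·) ?_ ?_
  · ring
  · exact Finset.sum_congr rfl fun k _ => by ring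

end StmtAux2

theorem stmt0 (α R : ℕ → ℂ) (P : ℕ → Polynomial ℂ)
    (hα0 : α 0 = 1) (hR1 : R 1 = 0)
    (hgen : ∀ n : ℕ, Polynomial.C (α n) * P n =
      ∑ m ∈ Finset.range (n + 1),
        Polynomial.C (α m) * PowerSeries.coeff n ((genSeries R) ^ m)) :
    ∀ n : ℕ, 1 ≤ n →
      Polynomial.C (α n) * Polynomial.X * Polynomial.derivative (P n)
        - ∑ k ∈ Finset.Icc 1 n,
            Polynomial.C (R (k + 1) * α (n - k)) * Polynomial.derivative (P (n - k))
      = Polynomial.C ((n : ℂ) * α n) * P n := by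
  intro n hn
  obtain ⟨N, rfl⟩ : ∃ N, n = N + 1 := ⟨n - 1, by omega⟩
  set S : ℕ → Polynomial ℂ := fun j =>
    ∑ m ∈ Finset.range (N + 2),
      Polynomial.C (α m) * PowerSeries.coeff j ((genSeries R) ^ m) with hS
  have hQ : ∀ j, j ≤ N + 1 → Polynomial.C (α j) * P j = S j := by
    intro j hj
    rw [hgen j, hS]
    apply Finset.sum_subset
    · intro m hm; simp only [Finset.mem_range] at *; omega
    · intro m hm hnm
      simp only [Finset.mem_range] at hm hnm
      rw [StmtAux.coeff_gen_pow_eq_zero R (by omega), mul_zero]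
  have hDS : ∀ j, Polynomial.derivative (S j) =
      ∑ m ∈ Finset.range (N + 2), Polynomial.C (α m) *
        Polynomial.derivative (PowerSeries.coeff j ((genSeries R) ^ m)) := by
    intro j
    simp [hS, Polynomial.derivative_sum, Polynomial.derivative_mul]
  have hDP : ∀ j, j ≤ N + 1 →
      Polynomial.C (α j) * Polynomial.derivative (P j) = Polynomial.derivative (S j) := by
    intro j hj
    rw [← hQ j hj, Polynomial.derivative_mul, Polynomial.derivative_C, zero_mul, zero_add]
  calc Polynomial.C (α (N+1)) * Polynomial.X * Polynomial.derivative (P (N+1))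
        - ∑ k ∈ Finset.Icc 1 (N+1),
            Polynomial.C (R (k + 1) * α (N+1 - k)) * Polynomial.derivative (P (N+1 - k))
      = Polynomial.X * Polynomial.derivative (S (N+1))
        - ∑ k ∈ Finset.Icc 1 (N+1),
            Polynomial.C (R (k+1)) * Polynomial.derivative (S (N+1-k)) := by
        have hsum : ∑ k ∈ Finset.Icc 1 (N+1),
            Polynomial.C (R (k+1)) * Polynomial.derivative (S (N+1-k))
            = ∑ k ∈ Finset.Icc 1 (N+1),
              Polynomial.C (R (k + 1) * α (N+1 - k)) * Polynomial.derivative (P (N+1 - k)) := by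
          apply Finset.sum_congr rfl
          intro k hk
          simp only [Finset.mem_Icc] at hk
          rw [← hDP (N+1-k) (by omega), Polynomial.C_mul]
          ring
        rw [hsum, ← hDP (N+1) le_rfl]
        ring
    _ = ∑ m ∈ Finset.range (N + 2), Polynomial.C (α m) *
          (Polynomial.X * Polynomial.derivative
              (PowerSeries.coeff (N+1) ((genSeries R) ^ m))
            - ∑ k ∈ Finset.Icc 1 (N+1), Polynomial.C (R (k+1)) * Polynomial.derivative
                (PowerSeries.coeff (N+1-k) ((genSeries R) ^ m))) := by
        simp only [hDS]
        simp only [Finset.mul_sum]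
        rw [Finset.sum_comm, ← Finset.sum_sub_distrib]
        apply Finset.sum_congr rfl
        intro m _
        rw [mul_sub, Finset.mul_sum]
        congr 1
        · ring
        · exact Finset.sum_congr rfl fun k _ => by ring
    _ = ∑ m ∈ Finset.range (N + 2), Polynomial.C (α m) *
          (((N+1 : ℕ) : Polynomial ℂ) *
            PowerSeries.coeff (N+1) ((genSeries R) ^ m)) := by
        exact Finset.sum_congr rfl fun m _ => by rw [StmtAux2.perm R hR1 m N]
    _ = ((N+1 : ℕ) : Polynomial ℂ) * S (N+1) := by
        rw [hS, Finset.mul_sum]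
        exact Finset.sum_congr rfl fun m _ => by ring
    _ = Polynomial.C ((↑(N+1) : ℂ) * α (N+1)) * P (N+1) := by
        rw [← hQ (N+1) le_rfl, Polynomial.C_mul, Polynomial.C_eq_natCast]
        push_cast
        ring
end

section
/- With F, R, and {P_n} as in the generating relation F(xt − R(t)) = Σ α_n P_n(x) t^n (α_0 = 1, R_1 = 0), if α_1 ≠ 0 and R_2 ≠ 0, then α_n ≠ 0 for all n ≥ 2. -/
/-- The scalar tail series `-∑_{j≥2} (R j / j) t^j`. -/
noncomputable def Tscal (R : ℕ → ℂ) : PowerSeries ℂ :=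
  PowerSeries.mk fun j => if j ≤ 1 then 0 else -(R j / j)

lemma Tscal_order (R : ℕ → ℂ) : ∀ (k j : ℕ), j < 2 * k →
    PowerSeries.coeff j (Tscal R ^ k) = 0 := by
  intro k
  induction k with
  | zero => intro j h; omega
  | succ k ih =>
    intro j h
    rw [pow_succ, PowerSeries.coeff_mul]
    apply Finset.sum_eq_zero
    intro p hp
    rw [Finset.HasAntidiagonal.mem_antidiagonal] at hp
    by_cases h1 : p.2 ≤ 1
    · have h2 : PowerSeries.coeff p.2 (Tscal R) = 0 := by
        simp [Tscal, PowerSeries.coeff_mk, h1]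
      rw [h2, mul_zero]
    · have h2 : p.1 < 2 * k := by omega
      rw [ih p.1 h2, zero_mul]

lemma Tscal_coeff_two (R : ℕ → ℂ) (j : ℕ) :
    PowerSeries.coeff 2 (Tscal R ^ j) = if j = 1 then -(R 2 / 2) else 0 := by
  match j with
  | 0 => simp [PowerSeries.coeff_one]
  | 1 => norm_num [Tscal, PowerSeries.coeff_mk]
  | (j+2) => rw [Tscal_order R (j+2) 2 (by omega)]; simp

lemma genSeries_eq (R : ℕ → ℂ) (hR1 : R 1 = 0) :
    genSeries R = PowerSeries.C Polynomial.X * PowerSeries.X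
      + PowerSeries.map Polynomial.C (Tscal R) := by
  ext j
  simp only [map_add, PowerSeries.coeff_map, PowerSeries.coeff_mk, genSeries, Tscal,
    PowerSeries.coeff_C_mul, PowerSeries.coeff_X]
  match j with
  | 0 => simp
  | 1 => simp [hR1]
  | (j+2) => simp

lemma key (R : ℕ → ℂ) (hR1 : R 1 = 0) (k m : ℕ) :
    Polynomial.coeff (PowerSeries.coeff (k+2) ((genSeries R)^m)) k
      = if m = k+1 then -((k+1 : ℂ) * (R 2 / 2)) else 0 := by
  rw [genSeries_eq R hR1, add_pow, map_sum]
  have hterm : ∀ i ∈ Finset.range (m+1),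
      Polynomial.coeff (PowerSeries.coeff (k+2)
        ((PowerSeries.C Polynomial.X * PowerSeries.X) ^ i *
          PowerSeries.map Polynomial.C (Tscal R) ^ (m - i) *
          ((m.choose i : ℕ) : PowerSeries (Polynomial ℂ)))) k
      = if i = k then
          (PowerSeries.coeff 2 (Tscal R ^ (m-i))) * (m.choose i : ℂ) else 0 := by
    intro i _
    have hc : ((m.choose i : ℕ) : PowerSeries (Polynomial ℂ))
        = PowerSeries.C (Polynomial.C ((m.choose i : ℕ) : ℂ)) := by
      simp [map_natCast]
    have hrw : (PowerSeries.C Polynomial.X * PowerSeries.X) ^ i *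
          PowerSeries.map Polynomial.C (Tscal R) ^ (m - i) *
          ((m.choose i : ℕ) : PowerSeries (Polynomial ℂ))
        = PowerSeries.C (Polynomial.X ^ i) *
          (PowerSeries.X ^ i *
            (PowerSeries.map Polynomial.C (Tscal R) ^ (m - i) *
              PowerSeries.C (Polynomial.C ((m.choose i : ℕ) : ℂ)))) := by
      rw [hc]
      simp only [map_pow, mul_pow]
      ring
    rw [hrw, PowerSeries.coeff_C_mul, PowerSeries.coeff_X_pow_mul']
    by_cases hik : i ≤ k + 2
    · rw [if_pos hik, PowerSeries.coeff_mul_C, ← map_pow, PowerSeries.coeff_map]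
      rw [← Polynomial.C_mul, mul_comm (Polynomial.X ^ i) _,
        Polynomial.coeff_C_mul, Polynomial.coeff_X_pow]
      by_cases hik2 : i = k
      · subst hik2
        simp
      · have hki : ¬ k = i := fun h => hik2 h.symm
        simp [hik2, hki]
    · rw [if_neg hik, mul_zero, Polynomial.coeff_zero]
      have : ¬ i = k := by omega
      rw [if_neg this]
  rw [Polynomial.finset_sum_coeff, Finset.sum_congr rfl hterm, Finset.sum_ite_eq' _ k]
  by_cases hm : m = k + 1
  · subst hm
    rw [if_pos (Finset.mem_range.mpr (by omega)), Tscal_coeff_two]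
    simp only [Nat.add_sub_cancel_left, Nat.add_sub_cancel]
    norm_num [Nat.choose_succ_self_right]
    ring
  · rw [if_neg hm]
    by_cases hk : k ∈ Finset.range (m+1)
    · rw [if_pos hk, Tscal_coeff_two]
      rw [Finset.mem_range] at hk
      have : ¬ m - k = 1 := by omega
      rw [if_neg this, zero_mul]
    · rw [if_neg hk]

theorem stmt1 (α R : ℕ → ℂ) (P : ℕ → Polynomial ℂ)
    (hα0 : α 0 = 1) (hR1 : R 1 = 0)
    (hgen : ∀ n : ℕ, Polynomial.C (α n) * P n =
      ∑ m ∈ Finset.range (n + 1),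
        Polynomial.C (α m) * PowerSeries.coeff n ((genSeries R) ^ m))
    (hα1 : α 1 ≠ 0) (hR2 : R 2 ≠ 0) :
    ∀ n : ℕ, 2 ≤ n → α n ≠ 0 := by
  have step : ∀ k : ℕ, α (k+2) = 0 → α (k+1) = 0 := by
    intro k hz
    have h := congrArg (fun p => Polynomial.coeff p k) (hgen (k+2))
    simp only [hz, map_zero, zero_mul, Polynomial.coeff_zero,
      Polynomial.finset_sum_coeff, Polynomial.coeff_C_mul] at h
    have h2 : ∀ m ∈ Finset.range (k+2+1),
        α m * Polynomial.coeff
            (PowerSeries.coeff (k+2) ((genSeries R)^m)) k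
        = if m = k+1 then α m * (-((k+1 : ℂ) * (R 2 / 2))) else 0 := by
      intro m _
      rw [key R hR1 k m]
      by_cases hm : m = k+1 <;> simp [hm]
    rw [Finset.sum_congr rfl h2, Finset.sum_ite_eq' _ (k+1),
      if_pos (Finset.mem_range.mpr (by omega))] at h
    have hne : -((k+1 : ℂ) * (R 2 / 2)) ≠ 0 := by
      have h1 : ((k:ℂ)+1) ≠ 0 := Nat.cast_add_one_ne_zero k
      have h3 : (R 2)/2 ≠ 0 := div_ne_zero hR2 two_ne_zero
      simpa using mul_ne_zero h1 h3
    rcases mul_eq_zero.mp h.symm with h' | h'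
    · exact h'
    · exact absurd h' hne
  have aux : ∀ n : ℕ, α (n+1) ≠ 0 := by
    intro n
    induction n with
    | zero => exact hα1
    | succ n ih => exact fun h => ih (step n h)
  intro n hn
  obtain ⟨j, rfl⟩ : ∃ j, n = j + 2 := ⟨n - 2, by omega⟩
  exact aux (j+1)
end

section
/- Suppose the polynomial set {P_n} generated by F(xt − R(t)) = Σ α_n P_n(x) t^n with α_1 R_2 ≠ 0 is symmetric, i.e. P_n(−x) = (−1)^n P_n(x) for all n ≥ 0. Then all odd coefficients of R vanish beyond the first: R_{2l+1} = 0 for all l ≥ 1. -/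
open PowerSeries Polynomial Finset

private lemma constCoeff_geom_sum (A B : PowerSeries (Polynomial ℂ))
    (hA0 : PowerSeries.constantCoeff A = 0) (hB0 : PowerSeries.constantCoeff B = 0)
    (m : ℕ) :
    PowerSeries.constantCoeff (∑ i ∈ range m, A ^ i * B ^ (m - 1 - i)) =
      if m = 1 then 1 else 0 := by
  rw [map_sum]
  match m with
  | 0 => simp
  | 1 => simp
  | (k+2) =>
    rw [if_neg (by omega)]
    apply Finset.sum_eq_zero
    intro i hi
    rw [map_mul, map_pow, map_pow, hA0, hB0]
    rcases Nat.eq_zero_or_pos i with h | h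
    · subst h
      have : (0 : Polynomial ℂ) ^ (k + 2 - 1 - 0) = 0 := zero_pow (by omega)
      rw [this]; ring
    · rw [zero_pow (by omega : i ≠ 0)]; ring

/-- Injectivity of composition with `F`: if two series with zero constant term
give the same `F`-composite coefficientwise, they are equal. -/
private lemma comp_inj (α : ℕ → ℂ) (hα1 : α 1 ≠ 0)
    (A B : PowerSeries (Polynomial ℂ))
    (hA0 : PowerSeries.constantCoeff A = 0) (hB0 : PowerSeries.constantCoeff B = 0)
    (h : ∀ n : ℕ, (∑ m ∈ range (n + 1), Polynomial.C (α m) * PowerSeries.coeff n (A ^ m)) =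
        ∑ m ∈ range (n + 1), Polynomial.C (α m) * PowerSeries.coeff n (B ^ m)) :
    A = B := by
  apply PowerSeries.ext
  intro j
  induction j using Nat.strong_induction_on with
  | _ j IH =>
    rcases Nat.eq_zero_or_pos j with hj | hj
    · subst hj
      rw [coeff_zero_eq_constantCoeff] at *
      rw [hA0, hB0]
    · -- key computation: difference of coefficients of powers
      have hm : ∀ m : ℕ, PowerSeries.coeff j (A ^ m) - PowerSeries.coeff j (B ^ m) =
          (if m = 1 then 1 else 0) * (PowerSeries.coeff j A - PowerSeries.coeff j B) := by
        intro m
        have hfac := geom_sum₂_mul A B m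
        have : PowerSeries.coeff j (A ^ m) - PowerSeries.coeff j (B ^ m)
            = PowerSeries.coeff j ((∑ i ∈ range m, A ^ i * B ^ (m - 1 - i)) * (A - B)) := by
          rw [hfac, map_sub]
        rw [this, PowerSeries.coeff_mul]
        rw [Finset.sum_eq_single (0, j)]
        · rw [coeff_zero_eq_constantCoeff_apply, constCoeff_geom_sum A B hA0 hB0, map_sub]
        · intro p hp hne
          have hsum : p.1 + p.2 = j := Finset.HasAntidiagonal.mem_antidiagonal.mp hp
          have hlt : p.2 < j := by
            rcases Nat.lt_or_ge p.2 j with h' | h'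
            · exact h'
            · exfalso; apply hne
              have : p.2 = j := by omega
              have : p.1 = 0 := by omega
              exact Prod.ext this ‹p.2 = j›
          rw [map_sub, IH p.2 hlt, sub_self, mul_zero]
        · intro hmem
          exfalso; exact hmem (Finset.HasAntidiagonal.mem_antidiagonal.mpr (by simp))
      have hkey : ∑ m ∈ range (j + 1), Polynomial.C (α m) *
          ((if m = 1 then 1 else 0) * (PowerSeries.coeff j A - PowerSeries.coeff j B)) = 0 := by
        have := h j
        calc ∑ m ∈ range (j + 1), Polynomial.C (α m) *
              ((if m = 1 then 1 else 0) * (PowerSeries.coeff j A - PowerSeries.coeff j B))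
            = ∑ m ∈ range (j + 1), (Polynomial.C (α m) * PowerSeries.coeff j (A ^ m)
                - Polynomial.C (α m) * PowerSeries.coeff j (B ^ m)) := by
              apply Finset.sum_congr rfl
              intro m _
              rw [← hm m]; ring
          _ = (∑ m ∈ range (j + 1), Polynomial.C (α m) * PowerSeries.coeff j (A ^ m))
                - ∑ m ∈ range (j + 1), Polynomial.C (α m) * PowerSeries.coeff j (B ^ m) := by
              rw [Finset.sum_sub_distrib]
          _ = 0 := by rw [this, sub_self]
      simp only [mul_ite, ite_mul, one_mul, zero_mul, mul_zero] at hkey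
      rw [Finset.sum_ite_eq' (range (j + 1)) 1] at hkey
      rw [if_pos (Finset.mem_range.mpr (by omega))] at hkey
      have hC : (Polynomial.C (α 1) : Polynomial ℂ) ≠ 0 := by
        simpa using hα1
      have hd := (mul_eq_zero.mp hkey).resolve_left hC
      exact sub_eq_zero.mp hd

theorem stmt2 (α R : ℕ → ℂ) (P : ℕ → Polynomial ℂ)
    (hα0 : α 0 = 1) (hR1 : R 1 = 0)
    (hgen : ∀ n : ℕ, Polynomial.C (α n) * P n =
      ∑ m ∈ Finset.range (n + 1),
        Polynomial.C (α m) * PowerSeries.coeff n ((genSeries R) ^ m))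
    (hα1 : α 1 ≠ 0) (hR2 : R 2 ≠ 0)
    (hsym : ∀ n : ℕ, ∀ x : ℂ, (P n).eval (-x) = (-1) ^ n * (P n).eval x) :
    ∀ l : ℕ, 1 ≤ l → R (2 * l + 1) = 0 := by
  -- the substitution x ↦ -x on coefficients
  set φ : Polynomial ℂ →+* Polynomial ℂ :=
    Polynomial.eval₂RingHom Polynomial.C (-Polynomial.X) with hφdef
  -- the substitution (x,t) ↦ (-x,-t)
  set Ψ : PowerSeries (Polynomial ℂ) →+* PowerSeries (Polynomial ℂ) :=
    (PowerSeries.rescale (-1 : Polynomial ℂ)).comp (PowerSeries.map φ) with hΨdef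
  have hΨc : ∀ (f : PowerSeries (Polynomial ℂ)) (n : ℕ),
      PowerSeries.coeff n (Ψ f) = (-1) ^ n * φ (PowerSeries.coeff n f) := by
    intro f n
    rw [hΨdef]
    simp [PowerSeries.coeff_rescale, PowerSeries.coeff_map]
  have hφC : ∀ c : ℂ, φ (Polynomial.C c) = Polynomial.C c := by
    intro c; simp [hφdef]
  have hφP : ∀ n : ℕ, φ (P n) = (-1) ^ n * P n := by
    intro n
    apply Polynomial.funext
    intro x
    have h1 : φ (P n) = (P n).comp (-Polynomial.X) := by
      simp [hφdef, Polynomial.comp]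
    rw [h1, Polynomial.eval_comp]
    simp [hsym n x]
  set R' : ℕ → ℂ := fun j => (-1) ^ j * R j with hR'def
  have hB : Ψ (genSeries R) = genSeries R' := by
    apply PowerSeries.ext
    intro n
    rw [hΨc]
    simp only [genSeries, PowerSeries.coeff_mk]
    match n with
    | 0 => simp
    | 1 => simp [hφdef, hR'def, hR1]
    | (k+2) =>
      rw [if_neg (by omega), if_neg (by omega), if_neg (by omega), if_neg (by omega)]
      rw [map_neg, hφC]
      have : R' (k + 2) / ((k+2 : ℕ) : ℂ) = (-1) ^ (k+2) * (R (k+2) / ((k+2 : ℕ) : ℂ)) := by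
        rw [hR'def]; ring
      rw [this, map_mul, map_pow, map_neg, map_one]
      ring
  have hone : ∀ n : ℕ, ((-1 : Polynomial ℂ)) ^ n * (-1) ^ n = 1 := by
    intro n
    rw [← pow_add, ← two_mul, pow_mul]
    norm_num
  have hgenB : ∀ n : ℕ, Polynomial.C (α n) * P n =
      ∑ m ∈ Finset.range (n + 1),
        Polynomial.C (α m) * PowerSeries.coeff n ((genSeries R') ^ m) := by
    intro n
    have step : ∀ m : ℕ, PowerSeries.coeff n ((genSeries R') ^ m)
        = (-1) ^ n * φ (PowerSeries.coeff n ((genSeries R) ^ m)) := by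
      intro m
      rw [← hB, ← map_pow, hΨc]
    calc Polynomial.C (α n) * P n
        = (-1) ^ n * φ (Polynomial.C (α n) * P n) := by
          rw [map_mul, hφC, hφP,
            show ((-1 : Polynomial ℂ)) ^ n * (Polynomial.C (α n) * ((-1) ^ n * P n))
              = ((-1 : Polynomial ℂ)) ^ n * (-1) ^ n * (Polynomial.C (α n) * P n) from by ring,
            hone n, one_mul]
      _ = (-1) ^ n * φ (∑ m ∈ Finset.range (n + 1),
            Polynomial.C (α m) * PowerSeries.coeff n ((genSeries R) ^ m)) := by
          rw [← hgen n]
      _ = ∑ m ∈ Finset.range (n + 1),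
            Polynomial.C (α m) * PowerSeries.coeff n ((genSeries R') ^ m) := by
          rw [map_sum, Finset.mul_sum]
          apply Finset.sum_congr rfl
          intro m _
          rw [map_mul, hφC, step m]
          ring
  have h0 : ∀ S : ℕ → ℂ, PowerSeries.constantCoeff (genSeries S) = 0 := by
    intro S
    simp [genSeries, PowerSeries.constantCoeff_mk]
  have hAB : genSeries R = genSeries R' := by
    apply comp_inj α hα1 _ _ (h0 R) (h0 R')
    intro n
    rw [← hgen n, ← hgenB n]
  intro l hl
  have hc := congrArg (fun f => PowerSeries.coeff (2 * l + 1) f) hAB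
  simp only [genSeries, PowerSeries.coeff_mk] at hc
  rw [if_neg (by omega), if_neg (by omega), if_neg (by omega), if_neg (by omega)] at hc
  have hC := neg_injective hc
  have h2 : R (2 * l + 1) / ((2 * l + 1 : ℕ) : ℂ) = R' (2 * l + 1) / ((2 * l + 1 : ℕ) : ℂ) :=
    Polynomial.C_injective hC
  have hodd : (-1 : ℂ) ^ (2 * l + 1) = -1 := Odd.neg_one_pow ⟨l, by ring⟩
  rw [hR'def] at h2
  simp only [hodd] at h2
  have hne : ((2 * l + 1 : ℕ) : ℂ) ≠ 0 := Nat.cast_ne_zero.mpr (by omega)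
  have h3 : R (2 * l + 1) = -1 * R (2 * l + 1) := by
    rw [div_eq_div_iff hne hne] at h2
    exact mul_right_cancel₀ hne h2
  have h4 : (2 : ℂ) * R (2 * l + 1) = 0 := by linear_combination h3
  exact (mul_eq_zero.mp h4).resolve_left two_ne_zero
end

section
/- Suppose F(xt − R(t)) = Σ_{n≥0} α_n P_n(x) t^n with α_0 = 1, R_1 = R_2 = 0, α_n ≠ 0 for all n ≥ 1, and {P_n} satisfies the monic three-term recursion x P_n = P_{n+1} + β_n P_n + ω_n P_{n−1} with P_{−1} = 0, P_0 = 1. Then R_n = 0 for all n ≥ 1; consequently R(t) = 0 and P_n(x) = x^n for all n. -/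
open PowerSeries in
lemma coeffA {S : PowerSeries (Polynomial ℂ)} {c : Polynomial ℂ} {N : ℕ}
    (h0 : ∀ j, j ≤ N → j ≠ 1 → coeff j S = 0)
    (h1 : coeff 1 S = c) :
    ∀ m n, n ≤ N → coeff n (S ^ m) = if m = n then c ^ n else 0 := by
  intro m
  induction m with
  | zero =>
    intro n hn
    rw [pow_zero, PowerSeries.coeff_one]
    rcases Nat.eq_zero_or_pos n with h | h
    · subst h; simp
    · rw [if_neg (by omega), if_neg (by omega)]
  | succ m ih =>
    intro n hn
    rw [pow_succ', PowerSeries.coeff_mul]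
    rcases Nat.eq_zero_or_pos n with h | h
    · subst h
      rw [Finset.Nat.antidiagonal_zero, Finset.sum_singleton]
      rw [h0 0 (by omega) (by omega), zero_mul, if_neg (by omega)]
    · rw [Finset.sum_eq_single (1, n - 1)]
      · rw [h1, ih (n - 1) (by omega)]
        rcases eq_or_ne m (n - 1) with he | he
        · rw [if_pos he, if_pos (by omega), ← pow_succ']
          congr 1; omega
        · rw [if_neg he, if_neg (by omega), mul_zero]
      · intro b hb hbne
        rw [Finset.HasAntidiagonal.mem_antidiagonal] at hb
        rw [h0 b.1 (by omega) ?_, zero_mul]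
        intro hb1
        apply hbne
        have : b = (b.1, b.2) := rfl
        rw [this, hb1]
        congr 1
        omega
      · intro hmem
        exfalso
        exact hmem (by rw [Finset.HasAntidiagonal.mem_antidiagonal]; omega)

open PowerSeries in
lemma coeffB {S : PowerSeries (Polynomial ℂ)} {c d : Polynomial ℂ} {N : ℕ}
    (hN : 2 ≤ N)
    (h0 : ∀ j, j ≤ N → j ≠ 1 → j ≠ N → coeff j S = 0)
    (h1 : coeff 1 S = c) (hNc : coeff N S = d) :
    ∀ m, coeff N (S ^ m) =
      if m = N then c ^ N else if m = 1 then d else 0 := by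
  have hA : ∀ m n, n ≤ N - 1 →
      coeff n (S ^ m) = if m = n then c ^ n else 0 :=
    coeffA (fun j hj hj1 => h0 j (by omega) hj1 (by omega)) h1
  intro m
  match m with
  | 0 =>
    rw [pow_zero, PowerSeries.coeff_one, if_neg (by omega), if_neg (by omega),
      if_neg (by omega)]
  | m + 1 =>
    rw [pow_succ', PowerSeries.coeff_mul]
    rcases le_or_gt m (N - 1) with hm | hm
    · rw [Finset.sum_eq_single (N - m, m)]
      · rw [hA m m (by omega), if_pos rfl]
        split_ifs with hif1 hif2
        · have he : m = N - 1 := by omega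
          subst he
          rw [show N - (N - 1) = 1 from by omega, h1, ← pow_succ',
            show N - 1 + 1 = N from by omega]
        · have he : m = 0 := by omega
          subst he
          simp [hNc]
        · rw [h0 (N - m) (by omega) (by omega) (by omega), zero_mul]
      · intro b hb hbne
        rw [Finset.HasAntidiagonal.mem_antidiagonal] at hb
        rcases eq_or_ne b.2 N with h2 | h2
        · have hb1 : b.1 = 0 := by omega
          rw [h0 b.1 (by omega) (by omega) (by omega), zero_mul]
        · rw [hA m b.2 (by omega)]
          rw [if_neg ?_, mul_zero]
          intro hmb
          apply hbne
          have : b = (b.1, b.2) := rfl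
          rw [this]
          congr 1 <;> omega
      · intro hmem
        exact absurd (by rw [Finset.HasAntidiagonal.mem_antidiagonal]; omega) hmem
    · rw [Finset.sum_eq_zero, if_neg (by omega), if_neg (by omega)]
      intro b hb
      rw [Finset.HasAntidiagonal.mem_antidiagonal] at hb
      rcases eq_or_ne b.2 N with h2 | h2
      · rw [h0 b.1 (by omega) (by omega) (by omega), zero_mul]
      · rw [hA m b.2 (by omega), if_neg (by omega), mul_zero]

theorem stmt15 (α R : ℕ → ℂ) (P : ℕ → Polynomial ℂ) (β ω : ℕ → ℂ)
    (hα0 : α 0 = 1) (hR1 : R 1 = 0) (hR2 : R 2 = 0)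
    (hαn : ∀ n : ℕ, 1 ≤ n → α n ≠ 0)
    (hgen : ∀ n : ℕ, Polynomial.C (α n) * P n =
      ∑ m ∈ Finset.range (n + 1),
        Polynomial.C (α m) * PowerSeries.coeff n ((genSeries R) ^ m))
    (hP0 : P 0 = 1)
    (hrec0 : Polynomial.X * P 0 = P 1 + Polynomial.C (β 0) * P 0)
    (hrec : ∀ n : ℕ, 1 ≤ n →
      Polynomial.X * P n = P (n + 1) + Polynomial.C (β n) * P n
        + Polynomial.C (ω n) * P (n - 1)) :
    (∀ n : ℕ, 1 ≤ n → R n = 0) ∧ (∀ n : ℕ, P n = Polynomial.X ^ n) := by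
  have hαne : ∀ n, α n ≠ 0 := by
    intro n
    cases n with
    | zero => rw [hα0]; exact one_ne_zero
    | succ k => exact hαn _ (by omega)
  have hCαne : ∀ n, Polynomial.C (α n) ≠ 0 := fun n => by
    simpa using hαne n
  have hc1 : PowerSeries.coeff 1 (genSeries R) = Polynomial.X := by
    simp [genSeries, hR1]
  have hcj : ∀ j, 2 ≤ j → PowerSeries.coeff j (genSeries R)
      = -Polynomial.C (R j / (j : ℂ)) := by
    intro j hj
    simp only [genSeries, PowerSeries.coeff_mk]
    rw [if_neg (by omega), if_neg (by omega)]
  have hc0 : PowerSeries.coeff 0 (genSeries R) = 0 := by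
    simp [genSeries]
  -- Key: if R vanishes up to N, then P n = X^n for n ≤ N
  have keyP : ∀ N : ℕ, (∀ k, 1 ≤ k → k ≤ N → R k = 0) → ∀ n, n ≤ N →
      P n = Polynomial.X ^ n := by
    intro N hRz n hn
    have h0 : ∀ j, j ≤ N → j ≠ 1 →
        PowerSeries.coeff j (genSeries R) = 0 := by
      intro j hj hj1
      rcases Nat.eq_zero_or_pos j with h | h
      · subst h; exact hc0
      · rw [hcj j (by omega), hRz j (by omega) hj, zero_div, map_zero, neg_zero]
    have hcoe := coeffA h0 hc1
    have hg := hgen n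
    rw [Finset.sum_congr rfl (fun m _ => by rw [hcoe m n hn])] at hg
    rw [Finset.sum_eq_single n (fun b _ hbne => by rw [if_neg hbne, mul_zero])
      (fun hmem => absurd (Finset.self_mem_range_succ n) hmem), if_pos rfl] at hg
    exact mul_left_cancel₀ (hCαne n) hg
  -- Main induction: R vanishes everywhere
  have hRall : ∀ n, ∀ k, 1 ≤ k → k ≤ n → R k = 0 := by
    intro n
    induction n with
    | zero => intro k h1 h2; omega
    | succ n ih =>
      intro k h1 h2
      rcases Nat.lt_or_ge k (n + 1) with hk | hk
      · exact ih k h1 (by omega)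
      · have hk' : k = n + 1 := by omega
        subst hk'
        rcases Nat.lt_or_ge n 2 with hn2 | hn2
        · interval_cases n
          · exact hR1
          · exact hR2
        · -- n ≥ 2, show R (n+1) = 0
          have hPle : ∀ j, j ≤ n → P j = Polynomial.X ^ j := keyP n ih
          have h0 : ∀ j, j ≤ n + 1 → j ≠ 1 → j ≠ n + 1 →
              PowerSeries.coeff j (genSeries R) = 0 := by
            intro j hj hj1 hjN
            rcases Nat.eq_zero_or_pos j with h | h
            · subst h; exact hc0
            · rw [hcj j (by omega), ih j (by omega) (by omega), zero_div,
                map_zero, neg_zero]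
          have hB := coeffB (N := n + 1) (by omega) h0 hc1 (hcj (n + 1) (by omega))
          have hg := hgen (n + 1)
          rw [Finset.sum_congr rfl (fun m _ => by rw [hB m])] at hg
          have hsplit : ∀ m ∈ Finset.range (n + 1 + 1),
              Polynomial.C (α m) * (if m = n + 1 then Polynomial.X ^ (n + 1)
                else if m = 1 then -Polynomial.C (R (n+1) / ((n+1 : ℕ) : ℂ)) else 0)
              = (if m = n + 1 then Polynomial.C (α m) * Polynomial.X ^ (n + 1) else 0)
                + (if m = 1 then Polynomial.C (α m) *
                    -Polynomial.C (R (n+1) / ((n+1 : ℕ) : ℂ)) else 0) := by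
            intro m _
            rcases eq_or_ne m (n + 1) with h | h
            · rw [if_pos h, if_pos h, if_neg (by omega), add_zero]
            · rw [if_neg h, if_neg h]
              rcases eq_or_ne m 1 with h1 | h1
              · rw [if_pos h1, if_pos h1, zero_add]
              · rw [if_neg h1, if_neg h1, mul_zero, add_zero]
          rw [Finset.sum_congr rfl hsplit, Finset.sum_add_distrib,
            Finset.sum_ite_eq' _ (n + 1) _, Finset.sum_ite_eq' _ 1 _,
            if_pos (Finset.mem_range.mpr (by omega)),
            if_pos (Finset.mem_range.mpr (by omega))] at hg
          have hr := hrec n (by omega)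
          rw [hPle n le_rfl, hPle (n - 1) (by omega)] at hr
          have hPN : P (n + 1) = Polynomial.X ^ (n + 1)
              - Polynomial.C (β n) * Polynomial.X ^ n
              - Polynomial.C (ω n) * Polynomial.X ^ (n - 1) := by
            linear_combination -hr
          rw [hPN] at hg
          have h00 := congrArg (fun p => Polynomial.coeff p 0) hg
          have hne1 : (0 : ℕ) ≠ n + 1 := by omega
          have hne2 : (0 : ℕ) ≠ n := by omega
          have hne3 : (0 : ℕ) ≠ n - 1 := by omega
          simp only [Polynomial.coeff_C_mul, Polynomial.coeff_sub,
            Polynomial.coeff_add, Polynomial.coeff_neg, Polynomial.coeff_X_pow,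
            Polynomial.coeff_C_zero, if_neg hne1, if_neg hne2, if_neg hne3,
            mul_zero, sub_zero, zero_sub, zero_add, mul_neg, neg_zero] at h00
          have hz : R (n + 1) / ((n + 1 : ℕ) : ℂ) = 0 := by
            have h01 : α 1 * (R (n + 1) / ((n + 1 : ℕ) : ℂ)) = 0 := by
              rw [← neg_eq_zero, ← h00]
            exact (mul_eq_zero.mp h01).resolve_left (hαne 1)
          rcases div_eq_zero_iff.mp hz with h | h
          · exact h
          · exact absurd h (Nat.cast_ne_zero.mpr (by omega))
  refine ⟨fun n hn => hRall n n hn le_rfl, fun n => keyP n (hRall n) n le_rfl⟩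
end

section
/- Let T_1 > 0, b ≠ 0 complex, and suppose {a_n} is a sequence of nonzero reals with lim_{k→∞} a_{2k}/(2k) = ∞ and a_{2k+1}(2b/T_1 + (T_1/2)(2k+3)/a_{2k}) = φ(k), where φ(k) = (T_1/2)·2k(2k+3)/(2k+1) − bA_2 + bA_3/(2k+1) + Σ_{l=2}^{k−1} ab/(2l+1) for constants a, A_2, A_3. Then lim_{k→∞} a_{2k+1}/(2k+1) = T_1²/(4b). -/
open Filter Finset Topology

theorem stmt18 (T1 : ℝ) (hT1 : 0 < T1) (b : ℂ) (hb : b ≠ 0)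
    (aseq : ℕ → ℝ) (hane : ∀ n : ℕ, aseq n ≠ 0)
    (a A2 A3 : ℂ)
    (hdiv : Tendsto (fun k : ℕ => aseq (2 * k) / (2 * (k : ℝ))) atTop atTop)
    (hphi : ∀ k : ℕ,
      (aseq (2 * k + 1) : ℂ) *
          (2 * b / (T1 : ℂ) + (T1 : ℂ) / 2 * (2 * (k : ℂ) + 3) / (aseq (2 * k) : ℂ))
        = (T1 : ℂ) / 2 * (2 * (k : ℂ) * (2 * (k : ℂ) + 3)) / (2 * (k : ℂ) + 1)
          - b * A2 + b * A3 / (2 * (k : ℂ) + 1)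
          + ∑ l ∈ Finset.Icc 2 (k - 1), a * b / (2 * (l : ℂ) + 1)) :
    Tendsto (fun k : ℕ => (aseq (2 * k + 1) : ℂ) / (2 * (k : ℂ) + 1)) atTop
      (nhds ((T1 : ℂ) ^ 2 / (4 * b))) := by
  have hT1' : (T1 : ℂ) ≠ 0 := Complex.ofReal_ne_zero.mpr hT1.ne'
  have hk1 : ∀ k : ℕ, (2 * (k : ℂ) + 1) ≠ 0 := by
    intro k
    have : ((2 * k + 1 : ℕ) : ℂ) ≠ 0 := Nat.cast_ne_zero.mpr (by omega)
    push_cast at this; convert this using 2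
  have hk1r : ∀ k : ℕ, (0:ℝ) < 2 * (k : ℝ) + 1 := by
    intro k; positivity
  -- real sequences
  set v : ℕ → ℝ := fun k => 1 / (2 * (k : ℝ) + 1) with hv
  set σ : ℕ → ℝ := fun k => ∑ l ∈ Finset.Icc 2 (k - 1), 1 / (2 * (l : ℝ) + 1) with hσ
  have h2k1 : Tendsto (fun k : ℕ => 2 * (k : ℝ) + 1) atTop atTop := by
    apply tendsto_atTop_add_const_right
    exact (tendsto_natCast_atTop_atTop).const_mul_atTop two_pos
  have hvlim : Tendsto v atTop (𝓝 0) := by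
    simpa [hv, one_div, Pi.inv_def] using h2k1.inv_tendsto_atTop
  have hces : Tendsto (fun n : ℕ => (n⁻¹ : ℝ) * ∑ i ∈ range n, v i) atTop (𝓝 0) :=
    hvlim.cesaro
  have hvnn : ∀ i : ℕ, 0 ≤ v i := fun i => by positivity
  have hσnn : ∀ k : ℕ, 0 ≤ σ k := fun k => Finset.sum_nonneg fun i _ => hvnn i
  have hwlim : Tendsto (fun k : ℕ => σ k / (2 * (k : ℝ) + 1)) atTop (𝓝 0) := by
    apply tendsto_of_tendsto_of_tendsto_of_le_of_le' tendsto_const_nhds hces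
    · exact Eventually.of_forall fun k => div_nonneg (hσnn k) (hk1r k).le
    · filter_upwards [eventually_ge_atTop 1] with k hk
      have hsub : Finset.Icc 2 (k - 1) ⊆ Finset.range k := by
        intro l hl
        simp only [Finset.mem_Icc] at hl
        exact Finset.mem_range.mpr (by omega)
      have h1 : σ k ≤ ∑ i ∈ range k, v i :=
        Finset.sum_le_sum_of_subset_of_nonneg hsub fun i _ _ => hvnn i
      have hkpos : (0:ℝ) < k := by exact_mod_cast hk
      have h2 : σ k / (2 * (k:ℝ) + 1) ≤ σ k / k := by
        apply div_le_div_of_nonneg_left (hσnn k) hkpos; linarith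
      calc σ k / (2 * (k:ℝ) + 1) ≤ σ k / k := h2
        _ ≤ (∑ i ∈ range k, v i) / k := by
            gcongr
        _ = (k:ℝ)⁻¹ * ∑ i ∈ range k, v i := by rw [div_eq_inv_mul]
  have hulim : Tendsto (fun k : ℕ => 2 * (k:ℝ) * (2 * (k:ℝ) + 3) / (2 * (k:ℝ) + 1) ^ 2)
      atTop (𝓝 1) := by
    have : ∀ k : ℕ, 2 * (k:ℝ) * (2 * (k:ℝ) + 3) / (2 * (k:ℝ) + 1) ^ 2
        = (1 - v k) * (1 + 2 * v k) := by
      intro k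
      have := (hk1r k).ne'
      simp only [hv]
      field_simp
      ring
    simp_rw [this]
    have hA : Tendsto (fun k : ℕ => 1 - v k) atTop (𝓝 (1 - 0)) :=
      tendsto_const_nhds.sub hvlim
    have hB : Tendsto (fun k : ℕ => 1 + 2 * v k) atTop (𝓝 (1 + 2 * 0)) :=
      tendsto_const_nhds.add (hvlim.const_mul 2)
    simpa using hA.mul hB
  -- φ / (2k+1)
  have hφlim : Tendsto (fun k : ℕ =>
      ((T1 : ℂ) / 2 * (2 * (k : ℂ) * (2 * (k : ℂ) + 3)) / (2 * (k : ℂ) + 1)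
        - b * A2 + b * A3 / (2 * (k : ℂ) + 1)
        + ∑ l ∈ Finset.Icc 2 (k - 1), a * b / (2 * (l : ℂ) + 1)) / (2 * (k : ℂ) + 1))
      atTop (𝓝 ((T1 : ℂ) / 2)) := by
    have heq : ∀ k : ℕ,
        ((T1 : ℂ) / 2 * (2 * (k : ℂ) * (2 * (k : ℂ) + 3)) / (2 * (k : ℂ) + 1)
          - b * A2 + b * A3 / (2 * (k : ℂ) + 1)
          + ∑ l ∈ Finset.Icc 2 (k - 1), a * b / (2 * (l : ℂ) + 1)) / (2 * (k : ℂ) + 1)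
        = (T1 : ℂ) / 2 * ((2 * (k:ℝ) * (2 * (k:ℝ) + 3) / (2 * (k:ℝ) + 1) ^ 2 : ℝ) : ℂ)
          - b * A2 * ((v k : ℝ) : ℂ) + b * A3 * ((v k : ℝ) : ℂ) ^ 2
          + a * b * ((σ k / (2 * (k:ℝ) + 1) : ℝ) : ℂ) := by
      intro k
      have hsum : (∑ l ∈ Finset.Icc 2 (k - 1), a * b / (2 * (l : ℂ) + 1))
          = a * b * ((σ k : ℝ) : ℂ) := by
        rw [hσ, Complex.ofReal_sum, Finset.mul_sum]
        apply Finset.sum_congr rfl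
        intro l _
        push_cast
        ring
      rw [hsum]
      have hvc : ((v k : ℝ) : ℂ) = 1 / (2*(k:ℂ)+1) := by
        rw [hv]; push_cast; ring
      have hwc : ((σ k / (2*(k:ℝ)+1) : ℝ) : ℂ) = ((σ k : ℝ) : ℂ) / (2*(k:ℂ)+1) := by
        rw [Complex.ofReal_div]; norm_cast
      have huc : (((2 * (k:ℝ) * (2 * (k:ℝ) + 3) / (2 * (k:ℝ) + 1) ^ 2) : ℝ) : ℂ)
          = 2*(k:ℂ)*(2*(k:ℂ)+3)/(2*(k:ℂ)+1)^2 := by push_cast; ring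
      rw [hvc, hwc, huc]
      generalize ((σ k : ℝ) : ℂ) = S
      generalize hX : (2*(k:ℂ)+1) = X
      have hX0 : X ≠ 0 := hX ▸ hk1 k
      ring
    simp_rw [heq]
    have hcoe : ∀ {f : ℕ → ℝ} {l : ℝ}, Tendsto f atTop (𝓝 l) →
        Tendsto (fun k => ((f k : ℝ) : ℂ)) atTop (𝓝 (l : ℂ)) := fun h =>
      (Complex.continuous_ofReal.tendsto _).comp h
    have hA : Tendsto (fun k : ℕ => (T1 : ℂ) / 2
          * ((2 * (k:ℝ) * (2 * (k:ℝ) + 3) / (2 * (k:ℝ) + 1) ^ 2 : ℝ) : ℂ))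
        atTop (𝓝 ((T1 : ℂ) / 2 * ((1:ℝ) : ℂ))) := tendsto_const_nhds.mul (hcoe hulim)
    have hB : Tendsto (fun k : ℕ => b * A2 * ((v k : ℝ) : ℂ)) atTop
        (𝓝 (b * A2 * ((0:ℝ) : ℂ))) := tendsto_const_nhds.mul (hcoe hvlim)
    have hC : Tendsto (fun k : ℕ => b * A3 * ((v k : ℝ) : ℂ) ^ 2) atTop
        (𝓝 (b * A3 * ((0:ℝ) : ℂ) ^ 2)) := tendsto_const_nhds.mul ((hcoe hvlim).pow 2)
    have hD : Tendsto (fun k : ℕ => a * b * ((σ k / (2 * (k:ℝ) + 1) : ℝ) : ℂ)) atTop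
        (𝓝 (a * b * ((0:ℝ) : ℂ))) := tendsto_const_nhds.mul (hcoe hwlim)
    have := ((hA.sub hB).add hC).add hD
    simpa using this
  -- c k
  set c : ℕ → ℂ := fun k => 2 * b / (T1 : ℂ) + (T1 : ℂ) / 2 * (2 * (k : ℂ) + 3) / (aseq (2 * k) : ℂ)
    with hcdef
  have hrlim : Tendsto (fun k : ℕ => (2 * (k:ℝ) + 3) / aseq (2 * k)) atTop (𝓝 0) := by
    have hinv : Tendsto (fun k : ℕ => 2 * (k:ℝ) / aseq (2 * k)) atTop (𝓝 0) := by
      have h := hdiv.inv_tendsto_atTop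
      exact h.congr fun k => by rw [Pi.inv_apply, inv_div]
    have h3 : Tendsto (fun k : ℕ => 3 / aseq (2 * k)) atTop (𝓝 0) := by
      have habs : Tendsto (fun k : ℕ => aseq (2 * k)) atTop atTop := by
        have h1 : Tendsto (fun k : ℕ => 2 * (k:ℝ)) atTop atTop :=
          (tendsto_natCast_atTop_atTop).const_mul_atTop two_pos
        have := hdiv.atTop_mul_atTop₀ h1
        apply this.congr'
        filter_upwards [eventually_ge_atTop 1] with k hk
        have : (2 * (k:ℝ)) ≠ 0 := by
          have : (0:ℝ) < k := by exact_mod_cast hk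
          positivity
        field_simp
      have := habs.inv_tendsto_atTop
      simpa [div_eq_mul_inv] using (this.const_mul (3:ℝ))
    have := hinv.add h3
    simp only [add_zero] at this
    apply this.congr
    intro k
    rw [← add_div]
  have hclim : Tendsto c atTop (𝓝 (2 * b / (T1 : ℂ))) := by
    have hcoe : Tendsto (fun k : ℕ => (2 * (k:ℂ) + 3) / (aseq (2 * k) : ℂ)) atTop
        (𝓝 (0 : ℂ)) := by
      have h := (Complex.continuous_ofReal.tendsto _).comp hrlim
      simp only [Complex.ofReal_zero] at h
      apply h.congr
      intro k
      simp only [Function.comp_apply]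
      push_cast
      ring
    have this : Tendsto (fun k : ℕ => 2 * b / (T1 : ℂ)
          + (T1:ℂ)/2 * ((2 * (k:ℂ) + 3) / (aseq (2 * k) : ℂ))) atTop
        (𝓝 (2 * b / (T1 : ℂ) + (T1:ℂ)/2 * 0)) :=
      tendsto_const_nhds.add (hcoe.const_mul ((T1:ℂ)/2))
    simp only [mul_zero, add_zero] at this
    apply this.congr
    intro k
    simp only [hcdef]
    ring
  have hcne : 2 * b / (T1 : ℂ) ≠ 0 := by
    apply div_ne_zero _ hT1'
    simpa using hb
  -- combine
  have hmain : Tendsto (fun k : ℕ => (aseq (2 * k + 1) : ℂ) / (2 * (k : ℂ) + 1)) atTop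
      (𝓝 (((T1 : ℂ) / 2) / (2 * b / (T1 : ℂ)))) := by
    apply (hφlim.div hclim hcne).congr'
    have hcne' : ∀ᶠ k in atTop, c k ≠ 0 := by
      have := hclim.eventually_ne hcne
      exact this
    filter_upwards [hcne'] with k hck
    have h := hphi k
    have : (aseq (2 * k + 1) : ℂ) / (2 * (k : ℂ) + 1) * c k
        = ((T1 : ℂ) / 2 * (2 * (k : ℂ) * (2 * (k : ℂ) + 3)) / (2 * (k : ℂ) + 1)
          - b * A2 + b * A3 / (2 * (k : ℂ) + 1)
          + ∑ l ∈ Finset.Icc 2 (k - 1), a * b / (2 * (l : ℂ) + 1)) / (2 * (k : ℂ) + 1) := by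
      rw [div_mul_eq_mul_div, ← h, hcdef]
    simp only [Pi.div_apply]
    rw [div_eq_iff hck]
    exact this.symm
  convert hmain using 2
  field_simp
  ring
end
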